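/- Suppose l is continuously differentiable with l′(ψ) > 0 for all ψ in an open interval I whose length is at most π. Then F is injective on the domain D = {(R,ψ) : ψ ∈ I and R > l(ψ)}; that is, the tangent rays of the basic curve, together with the parameter R, form a genuine coordinate system (a foliation of the domain D by disjoint rays). -/

import Mathlib

open Real

/-- Equation (9) of the paper: Cartesian coordinates as functions of the
coordinates `(R, ψ)` built from the tangent rays of a basic curve. -/
noncomputable def F (l : ℝ → ℝ) (p : ℝ × ℝ) : ℝ × ℝ :=
  (p.1 * Real.sin p.2 - ∫ t in (0:ℝ)..p.2, l t * Real.cos t,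
   p.1 * Real.cos p.2 + ∫ t in (0:ℝ)..p.2, l t * Real.sin t)

lemma stmt_7_key (l : ℝ → ℝ) (hl : ContDiff ℝ 1 l) (a b : ℝ) (hab : b - a ≤ Real.pi)
    (hl' : ∀ ψ ∈ Set.Ioo a b, 0 < deriv l ψ)
    (R₁ ψ₁ R₂ ψ₂ : ℝ) (hψ₁ : ψ₁ ∈ Set.Ioo a b) (hψ₂ : ψ₂ ∈ Set.Ioo a b)
    (hR₂ : l ψ₂ < R₂) (hF : F l (R₁, ψ₁) = F l (R₂, ψ₂)) : ¬ ψ₁ < ψ₂ := by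
  intro hlt
  have hlc : Continuous l := hl.continuous
  set A : ℝ → ℝ := fun u => ∫ s in (0:ℝ)..u, l s * Real.cos s with hA_def
  set B : ℝ → ℝ := fun u => ∫ s in (0:ℝ)..u, l s * Real.sin s with hB_def
  have hA : ∀ t, HasDerivAt A (l t * Real.cos t) t := fun t =>
    ((hlc.mul Real.continuous_cos).integral_hasStrictDerivAt 0 t).hasDerivAt
  have hB : ∀ t, HasDerivAt B (l t * Real.sin t) t := fun t =>
    ((hlc.mul Real.continuous_sin).integral_hasStrictDerivAt 0 t).hasDerivAt
  have hx : R₁ * Real.sin ψ₁ - A ψ₁ = R₂ * Real.sin ψ₂ - A ψ₂ := congrArg Prod.fst hF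
  have hy : R₁ * Real.cos ψ₁ + B ψ₁ = R₂ * Real.cos ψ₂ + B ψ₂ := congrArg Prod.snd hF
  set x : ℝ := R₂ * Real.sin ψ₂ - A ψ₂ with hx_def
  set y : ℝ := R₂ * Real.cos ψ₂ + B ψ₂ with hy_def
  set g : ℝ → ℝ := fun t => x * Real.cos t - y * Real.sin t + A t * Real.cos t + B t * Real.sin t
    with hg_def
  set h : ℝ → ℝ := fun t => x * Real.sin t + y * Real.cos t + A t * Real.sin t - B t * Real.cos t
    with hh_def
  have hg : ∀ t, HasDerivAt g (l t - h t) t := by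
    intro t
    have h1 : HasDerivAt (fun t => x * Real.cos t) (x * (-Real.sin t)) t :=
      (Real.hasDerivAt_cos t).const_mul x
    have h2 : HasDerivAt (fun t => y * Real.sin t) (y * Real.cos t) t :=
      (Real.hasDerivAt_sin t).const_mul y
    have h3 : HasDerivAt (fun t => A t * Real.cos t)
        (l t * Real.cos t * Real.cos t + A t * (-Real.sin t)) t :=
      (hA t).mul (Real.hasDerivAt_cos t)
    have h4 : HasDerivAt (fun t => B t * Real.sin t)
        (l t * Real.sin t * Real.sin t + B t * Real.cos t) t :=
      (hB t).mul (Real.hasDerivAt_sin t)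
    have := ((h1.sub h2).add h3).add h4
    refine this.congr_deriv (Eq.symm ?_)
    have pyth := Real.sin_sq_add_cos_sq t
    simp only [hh_def]
    linear_combination (-(l t)) * pyth
  have hh : ∀ t, HasDerivAt h (g t) t := by
    intro t
    have h1 : HasDerivAt (fun t => x * Real.sin t) (x * Real.cos t) t :=
      (Real.hasDerivAt_sin t).const_mul x
    have h2 : HasDerivAt (fun t => y * Real.cos t) (y * (-Real.sin t)) t :=
      (Real.hasDerivAt_cos t).const_mul y
    have h3 : HasDerivAt (fun t => A t * Real.sin t)
        (l t * Real.cos t * Real.sin t + A t * Real.cos t) t :=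
      (hA t).mul (Real.hasDerivAt_sin t)
    have h4 : HasDerivAt (fun t => B t * Real.cos t)
        (l t * Real.sin t * Real.cos t + B t * (-Real.sin t)) t :=
      (hB t).mul (Real.hasDerivAt_cos t)
    have := ((h1.add h2).add h3).sub h4
    refine this.congr_deriv (Eq.symm ?_)
    simp only [hg_def]
    ring
  set W : ℝ → ℝ := fun t => (l t - h t) * Real.sin (t - ψ₁) - Real.cos (t - ψ₁) * g t
    with hW_def
  have hW : ∀ t, HasDerivAt W (deriv l t * Real.sin (t - ψ₁)) t := by
    intro t
    have hsub : HasDerivAt (fun t : ℝ => t - ψ₁) 1 t := (hasDerivAt_id t).sub_const ψ₁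
    have hsin : HasDerivAt (fun t => Real.sin (t - ψ₁)) (Real.cos (t - ψ₁) * 1) t :=
      ((Real.hasDerivAt_sin (t - ψ₁)).comp t hsub :)
    have hcos : HasDerivAt (fun t => Real.cos (t - ψ₁)) (-Real.sin (t - ψ₁) * 1) t :=
      ((Real.hasDerivAt_cos (t - ψ₁)).comp t hsub :)
    have hld : HasDerivAt l (deriv l t) t :=
      ((hl.differentiable one_ne_zero) t).hasDerivAt
    have h1 : HasDerivAt (fun t => (l t - h t) * Real.sin (t - ψ₁))
        ((deriv l t - g t) * Real.sin (t - ψ₁) + (l t - h t) * (Real.cos (t - ψ₁) * 1)) t :=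
      (hld.sub (hh t)).mul hsin
    have h2 : HasDerivAt (fun t => Real.cos (t - ψ₁) * g t)
        ((-Real.sin (t - ψ₁) * 1) * g t + Real.cos (t - ψ₁) * (l t - h t)) t :=
      hcos.mul (hg t)
    have := h1.sub h2
    refine this.congr_deriv (Eq.symm ?_)
    ring
  -- ψ₂ - ψ₁ < π
  have hlt_pi : ψ₂ - ψ₁ < Real.pi :=
    lt_of_lt_of_le (by cases hψ₁; cases hψ₂; linarith) hab
  -- W is strictly monotone on [ψ₁, ψ₂]
  have hmono : StrictMonoOn W (Set.Icc ψ₁ ψ₂) := by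
    apply strictMonoOn_of_deriv_pos (convex_Icc ψ₁ ψ₂)
    · exact Continuous.continuousOn (by
        exact continuous_iff_continuousAt.2 fun t => (hW t).continuousAt)
    · intro t ht
      rw [interior_Icc] at ht
      rw [(hW t).deriv]
      have ht1 : t ∈ Set.Ioo a b := ⟨lt_trans hψ₁.1 ht.1, lt_trans ht.2 hψ₂.2⟩
      have hsinpos : 0 < Real.sin (t - ψ₁) :=
        Real.sin_pos_of_pos_of_lt_pi (by linarith [ht.1]) (by linarith [ht.2])
      exact mul_pos (hl' t ht1) hsinpos
  have hWlt : W ψ₁ < W ψ₂ := hmono (Set.left_mem_Icc.2 hlt.le) (Set.right_mem_Icc.2 hlt.le) hlt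
  -- compute W ψ₁ and W ψ₂
  have hgψ₁ : g ψ₁ = 0 := by
    simp only [hg_def]
    rw [← hx, ← hy]; ring
  have hgψ₂ : g ψ₂ = 0 := by
    simp only [hg_def, hx_def, hy_def]; ring
  have hhψ₂ : h ψ₂ = R₂ := by
    simp only [hh_def, hx_def, hy_def]
    have pyth := Real.sin_sq_add_cos_sq ψ₂
    linear_combination R₂ * pyth
  have hWψ₁ : W ψ₁ = 0 := by
    simp only [hW_def, hgψ₁, sub_self, Real.sin_zero, Real.cos_zero]; ring
  have hWψ₂ : W ψ₂ = (l ψ₂ - R₂) * Real.sin (ψ₂ - ψ₁) := by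
    simp only [hW_def, hgψ₂, hhψ₂]; ring
  have hsinpos : 0 < Real.sin (ψ₂ - ψ₁) :=
    Real.sin_pos_of_pos_of_lt_pi (by linarith) hlt_pi
  nlinarith [hWlt, hWψ₁, hWψ₂, hsinpos, hR₂]

/-- The tangent rays of the basic curve, together with the parameter `R`, form a
genuine coordinate system: `F` is injective on the domain
`D = {(R,ψ) : ψ ∈ I, R > l(ψ)}`. -/
theorem stmt_7 (l : ℝ → ℝ) (hl : ContDiff ℝ 1 l) (a b : ℝ) (hab : b - a ≤ Real.pi)
    (hl' : ∀ ψ ∈ Set.Ioo a b, 0 < deriv l ψ) :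
    Set.InjOn (F l) {p : ℝ × ℝ | p.2 ∈ Set.Ioo a b ∧ l p.2 < p.1} := by
  rintro ⟨R₁, ψ₁⟩ ⟨hψ₁, hR₁⟩ ⟨R₂, ψ₂⟩ ⟨hψ₂, hR₂⟩ hF
  simp only [Set.mem_setOf_eq] at hψ₁ hR₁ hψ₂ hR₂
  have hψ : ψ₁ = ψ₂ := le_antisymm
    (not_lt.1 (stmt_7_key l hl a b hab hl' R₂ ψ₂ R₁ ψ₁ hψ₂ hψ₁ hR₁ hF.symm))
    (not_lt.1 (stmt_7_key l hl a b hab hl' R₁ ψ₁ R₂ ψ₂ hψ₁ hψ₂ hR₂ hF))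
  subst hψ
  have h1 : R₁ * Real.sin ψ₁ - (∫ t in (0:ℝ)..ψ₁, l t * Real.cos t)
      = R₂ * Real.sin ψ₁ - (∫ t in (0:ℝ)..ψ₁, l t * Real.cos t) := congrArg Prod.fst hF
  have h2 : R₁ * Real.cos ψ₁ + (∫ t in (0:ℝ)..ψ₁, l t * Real.sin t)
      = R₂ * Real.cos ψ₁ + (∫ t in (0:ℝ)..ψ₁, l t * Real.sin t) := congrArg Prod.snd hF
  have hs : (R₁ - R₂) * Real.sin ψ₁ = 0 := by linarith
  have hc : (R₁ - R₂) * Real.cos ψ₁ = 0 := by linarith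
  have pyth := Real.sin_sq_add_cos_sq ψ₁
  have : R₁ = R₂ := by
    linear_combination Real.sin ψ₁ * hs + Real.cos ψ₁ * hc - (R₁ - R₂) * pyth
  simp [this]
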